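/- Let q, p be strictly positive PMFs on n categories with nondecreasing ratios q_k/p_k. Fix indices 1 ≤ i < j ≤ n, ρ ∈ [ρ_i, ρ_{i+1}] and σ ∈ [σ_j, σ_{j−1}] with (ρ,σ) in the noncritical region (ρ ≤ ρ_crit(σ)). Define r*_k = (p_k/P_i)(Q_i + ρ) − q_k for k ≤ i and r*_k = 0 otherwise; s*_k = q_k − (p_k/T_j)(S_j − σ) for k ≥ j and s*_k = 0 otherwise. Then r* and s* are feasible: r*_k ≥ 0, s*_k ≥ 0, q_k + r*_k − s*_k ≥ 0 for all k, Σ_k r*_k = ρ, and Σ_k s*_k = σ. -/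

import Mathlib

private lemma ratio_mono_aux (n : ℕ) (q p : ℕ → ℝ)
    (hmono : ∀ k, 1 ≤ k → k < n → q k / p k ≤ q (k+1) / p (k+1)) :
    ∀ a b, 1 ≤ a → a ≤ b → b ≤ n → q a / p a ≤ q b / p b := by
  intro a b ha hab hbn
  induction b, hab using Nat.le_induction with
  | base => exact le_refl _
  | succ b hab ih =>
      exact le_trans (ih (by omega)) (hmono b (by omega) (by omega))

private lemma sum_pos_Icc (f : ℕ → ℝ) (n a b : ℕ)
    (hf : ∀ k ∈ Finset.Icc 1 n, 0 < f k) (ha : 1 ≤ a) (hab : a ≤ b) (hbn : b ≤ n) :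
    0 < ∑ k ∈ Finset.Icc a b, f k := by
  apply Finset.sum_pos
  · intro k hk
    simp only [Finset.mem_Icc] at hk
    exact hf k (Finset.mem_Icc.mpr ⟨le_trans ha hk.1, le_trans hk.2 hbn⟩)
  · exact ⟨a, Finset.mem_Icc.mpr ⟨le_refl a, hab⟩⟩

private lemma sum_nonneg_Icc (f : ℕ → ℝ) (n a b : ℕ)
    (hf : ∀ k ∈ Finset.Icc 1 n, 0 < f k) (ha : 1 ≤ a) (hbn : b ≤ n) :
    0 ≤ ∑ k ∈ Finset.Icc a b, f k := by
  apply Finset.sum_nonneg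
  intro k hk
  simp only [Finset.mem_Icc] at hk
  exact (hf k (Finset.mem_Icc.mpr ⟨le_trans ha hk.1, le_trans hk.2 hbn⟩)).le

/-- Feasibility of the optimal forgery and suppression strategies: on the noncritical
region, r*_k = (p_k/P_i)(Q_i+ρ) − q_k for k ≤ i (else 0) and
s*_k = q_k − (p_k/T_j)(S_j−σ) for k ≥ j (else 0) are nonnegative, keep q_k+r_k−s_k
nonnegative, and sum to ρ and σ respectively. -/
theorem optimal_strategies_feasible
    (n : ℕ) (hn : 2 ≤ n) (q p : ℕ → ℝ)
    (hq : ∀ k ∈ Finset.Icc 1 n, 0 < q k) (hp : ∀ k ∈ Finset.Icc 1 n, 0 < p k)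
    (hqsum : ∑ k ∈ Finset.Icc 1 n, q k = 1) (hpsum : ∑ k ∈ Finset.Icc 1 n, p k = 1)
    (hmono : ∀ k, 1 ≤ k → k < n → q k / p k ≤ q (k+1) / p (k+1))
    (i j : ℕ) (hi : 1 ≤ i) (hij : i < j) (hj : j ≤ n)
    (ρ σ : ℝ)
    (hρlo : (∑ k ∈ Finset.Icc 1 i, p k) * (q i / p i) - ∑ k ∈ Finset.Icc 1 i, q k ≤ ρ)
    (hρhi : ρ ≤ (∑ k ∈ Finset.Icc 1 i, p k) * (q (i+1) / p (i+1))
              - ∑ k ∈ Finset.Icc 1 i, q k)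
    (hσlo : (∑ k ∈ Finset.Icc j n, q k)
              - (∑ k ∈ Finset.Icc j n, p k) * (q j / p j) ≤ σ)
    (hσhi : σ ≤ (∑ k ∈ Finset.Icc (j-1) n, q k)
              - (∑ k ∈ Finset.Icc (j-1) n, p k) * (q (j-1) / p (j-1)))
    (hnoncrit : ρ ≤ ((∑ k ∈ Finset.Icc 1 (j-1), p k) / (∑ k ∈ Finset.Icc j n, p k))
                  * ((∑ k ∈ Finset.Icc j n, q k) - σ) - ∑ k ∈ Finset.Icc 1 (j-1), q k)
    (r s : ℕ → ℝ)
    (hr : ∀ k, r k = if k ≤ i then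
        (p k / (∑ m ∈ Finset.Icc 1 i, p m)) * ((∑ m ∈ Finset.Icc 1 i, q m) + ρ) - q k
      else 0)
    (hs : ∀ k, s k = if j ≤ k then
        q k - (p k / (∑ m ∈ Finset.Icc j n, p m)) * ((∑ m ∈ Finset.Icc j n, q m) - σ)
      else 0) :
    (∀ k ∈ Finset.Icc 1 n, 0 ≤ r k) ∧
    (∀ k ∈ Finset.Icc 1 n, 0 ≤ s k) ∧
    (∀ k ∈ Finset.Icc 1 n, 0 ≤ q k + r k - s k) ∧
    (∑ k ∈ Finset.Icc 1 n, r k = ρ) ∧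
    (∑ k ∈ Finset.Icc 1 n, s k = σ) := by
  have hin : i ≤ n := le_trans (le_of_lt hij) hj
  have hj1 : 1 ≤ j := le_trans hi (le_of_lt hij)
  have hij' : i ≤ j - 1 := by omega
  set P := ∑ m ∈ Finset.Icc 1 i, p m with hPdef
  set Q := ∑ m ∈ Finset.Icc 1 i, q m with hQdef
  set T := ∑ m ∈ Finset.Icc j n, p m with hTdef
  set S := ∑ m ∈ Finset.Icc j n, q m with hSdef
  have hP : 0 < P := sum_pos_Icc p n 1 i hp le_rfl hi hin
  have hT : 0 < T := sum_pos_Icc p n j n hp hj1 hj le_rfl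
  have hP' : 0 < ∑ m ∈ Finset.Icc 1 (j-1), p m :=
    sum_pos_Icc p n 1 (j-1) hp le_rfl (by omega) (by omega)
  have hpi : 0 < p i := hp i (Finset.mem_Icc.mpr ⟨hi, hin⟩)
  have hqi : 0 < q i := hq i (Finset.mem_Icc.mpr ⟨hi, hin⟩)
  -- Q + ρ is positive
  have hQρ : 0 < Q + ρ := by
    have := mul_pos hP (div_pos hqi hpi)
    linarith
  -- ratio bound for forgery side
  have hratioρ : ∀ k, 1 ≤ k → k ≤ i → q k / p k ≤ (Q + ρ) / P := by
    intro k h1 h2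
    have h3 : q k / p k ≤ q i / p i :=
      ratio_mono_aux n q p hmono k i h1 h2 hin
    have h4 : q i / p i ≤ (Q + ρ) / P := by
      rw [le_div_iff₀ hP]
      rw [mul_comm]
      linarith
    linarith
  -- ratio bound for suppression side
  have hratioσ : ∀ k, j ≤ k → k ≤ n → (S - σ) / T ≤ q k / p k := by
    intro k h1 h2
    have h3 : q j / p j ≤ q k / p k :=
      ratio_mono_aux n q p hmono j k hj1 h1 h2
    have h4 : (S - σ) / T ≤ q j / p j := by
      rw [div_le_iff₀ hT]
      rw [mul_comm]
      linarith
    linarith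
  -- S - σ > 0 from the noncritical condition
  have hQ'Q : Q ≤ ∑ m ∈ Finset.Icc 1 (j-1), q m := by
    have hsplit : (∑ k ∈ Finset.Ioc 0 i, q k) + ∑ k ∈ Finset.Ioc i (j-1), q k
        = ∑ k ∈ Finset.Ioc 0 (j-1), q k :=
      Finset.sum_Ioc_consecutive q (Nat.zero_le i) hij'
    have e1 : Finset.Icc 1 i = Finset.Ioc 0 i := by rw [← Finset.Icc_add_one_left_eq_Ioc, zero_add]
    have e2 : Finset.Icc 1 (j-1) = Finset.Ioc 0 (j-1) := by rw [← Finset.Icc_add_one_left_eq_Ioc, zero_add]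
    have e3 : Finset.Ioc i (j-1) = Finset.Icc (i+1) (j-1) := (Finset.Icc_add_one_left_eq_Ioc i (j-1)).symm
    have hnn : 0 ≤ ∑ k ∈ Finset.Ioc i (j-1), q k := by
      rw [e3]; exact sum_nonneg_Icc q n (i+1) (j-1) hq (by omega) (by omega)
    rw [hQdef, e1, e2]
    linarith
  have hSσ : 0 < S - σ := by
    have h1 : 0 < ρ + ∑ m ∈ Finset.Icc 1 (j-1), q m := by
      have := mul_pos hP (div_pos hqi hpi)
      linarith
    have h2 : 0 < (∑ m ∈ Finset.Icc 1 (j-1), p m) / T * (S - σ) := by linarith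
    by_contra h
    push_neg at h
    have := mul_nonpos_of_nonneg_of_nonpos (le_of_lt (div_pos hP' hT)) h
    linarith
  -- nonnegativity of r
  have hrnn : ∀ k ∈ Finset.Icc 1 n, 0 ≤ r k := by
    intro k hk
    simp only [Finset.mem_Icc] at hk
    rw [hr k]
    by_cases hki : k ≤ i
    · rw [if_pos hki]
      have hpk : 0 < p k := hp k (Finset.mem_Icc.mpr ⟨hk.1, hk.2⟩)
      have h1 : q k / p k ≤ (Q + ρ) / P := hratioρ k hk.1 hki
      have h2 : p k * (q k / p k) ≤ p k * ((Q + ρ) / P) :=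
        mul_le_mul_of_nonneg_left h1 hpk.le
      have h3 : p k * (q k / p k) = q k := by field_simp
      have h4 : p k * ((Q + ρ) / P) = p k / P * (Q + ρ) := by ring
      linarith
    · rw [if_neg hki]
  -- nonnegativity of s
  have hsnn : ∀ k ∈ Finset.Icc 1 n, 0 ≤ s k := by
    intro k hk
    simp only [Finset.mem_Icc] at hk
    rw [hs k]
    by_cases hkj : j ≤ k
    · rw [if_pos hkj]
      have hpk : 0 < p k := hp k (Finset.mem_Icc.mpr ⟨hk.1, hk.2⟩)
      have h1 : (S - σ) / T ≤ q k / p k := hratioσ k hkj hk.2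
      have h2 : p k * ((S - σ) / T) ≤ p k * (q k / p k) :=
        mul_le_mul_of_nonneg_left h1 hpk.le
      have h3 : p k * (q k / p k) = q k := by field_simp
      have h4 : p k * ((S - σ) / T) = p k / T * (S - σ) := by ring
      linarith
    · rw [if_neg hkj]
  -- nonnegativity of q + r - s
  have hqrs : ∀ k ∈ Finset.Icc 1 n, 0 ≤ q k + r k - s k := by
    intro k hk
    simp only [Finset.mem_Icc] at hk
    have hpk : 0 < p k := hp k (Finset.mem_Icc.mpr ⟨hk.1, hk.2⟩)
    have hqk : 0 < q k := hq k (Finset.mem_Icc.mpr ⟨hk.1, hk.2⟩)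
    rw [hr k, hs k]
    by_cases hki : k ≤ i
    · rw [if_pos hki, if_neg (by omega)]
      have : 0 ≤ p k / P * (Q + ρ) :=
        mul_nonneg (div_nonneg hpk.le hP.le) hQρ.le
      linarith
    · rw [if_neg hki]
      by_cases hkj : j ≤ k
      · rw [if_pos hkj]
        have : 0 ≤ p k / T * (S - σ) :=
          mul_nonneg (div_nonneg hpk.le hT.le) hSσ.le
        linarith
      · rw [if_neg hkj]
        linarith
  -- sum of r
  have hrsum : ∑ k ∈ Finset.Icc 1 n, r k = ρ := by
    have e1 : Finset.Icc 1 n = Finset.Ioc 0 n := by rw [← Finset.Icc_add_one_left_eq_Ioc, zero_add]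
    have e2 : Finset.Icc 1 i = Finset.Ioc 0 i := by rw [← Finset.Icc_add_one_left_eq_Ioc, zero_add]
    have hsplit : (∑ k ∈ Finset.Ioc 0 i, r k) + ∑ k ∈ Finset.Ioc i n, r k
        = ∑ k ∈ Finset.Ioc 0 n, r k :=
      Finset.sum_Ioc_consecutive r (Nat.zero_le i) hin
    have htail : ∑ k ∈ Finset.Ioc i n, r k = 0 := by
      apply Finset.sum_eq_zero
      intro k hk
      simp only [Finset.mem_Ioc] at hk
      rw [hr k, if_neg (by omega)]
    have hhead : ∑ k ∈ Finset.Ioc 0 i, r k = ρ := by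
      have : ∑ k ∈ Finset.Ioc 0 i, r k
          = ∑ k ∈ Finset.Ioc 0 i, (p k * ((Q + ρ) / P) - q k) := by
        apply Finset.sum_congr rfl
        intro k hk
        simp only [Finset.mem_Ioc] at hk
        rw [hr k, if_pos hk.2]
        ring
      rw [this, Finset.sum_sub_distrib, ← Finset.sum_mul, ← e2, ← hPdef, ← hQdef]
      field_simp
      ring
    rw [e1, ← hsplit, htail, hhead, add_zero]
  -- sum of s
  have hssum : ∑ k ∈ Finset.Icc 1 n, s k = σ := by
    have e1 : Finset.Icc 1 n = Finset.Ioc 0 n := by rw [← Finset.Icc_add_one_left_eq_Ioc, zero_add]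
    have e2 : Finset.Icc j n = Finset.Ioc (j-1) n := by
      rw [← Finset.Icc_add_one_left_eq_Ioc]; congr 1; omega
    have hsplit : (∑ k ∈ Finset.Ioc 0 (j-1), s k) + ∑ k ∈ Finset.Ioc (j-1) n, s k
        = ∑ k ∈ Finset.Ioc 0 n, s k :=
      Finset.sum_Ioc_consecutive s (Nat.zero_le (j-1)) (by omega)
    have hhead : ∑ k ∈ Finset.Ioc 0 (j-1), s k = 0 := by
      apply Finset.sum_eq_zero
      intro k hk
      simp only [Finset.mem_Ioc] at hk
      rw [hs k, if_neg (by omega)]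
    have htail : ∑ k ∈ Finset.Ioc (j-1) n, s k = σ := by
      have : ∑ k ∈ Finset.Ioc (j-1) n, s k
          = ∑ k ∈ Finset.Ioc (j-1) n, (q k - p k * ((S - σ) / T)) := by
        apply Finset.sum_congr rfl
        intro k hk
        simp only [Finset.mem_Ioc] at hk
        rw [hs k, if_pos (by omega)]
        ring
      rw [this, Finset.sum_sub_distrib, ← Finset.sum_mul, ← e2, ← hTdef, ← hSdef]
      field_simp
      ring
    rw [e1, ← hsplit, hhead, htail, zero_add]
  exact ⟨hrnn, hsnn, hqrs, hrsum, hssum⟩
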